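/- Let m, N ≥ 1 and T ≥ 2 be integers. On a probability space, let A_1,…,A_T be random subsets of {1,…,N} with |A_t| ≤ m almost surely, let n_{a,t} := #{τ ∈ {1,…,t−1} : a ∈ A_τ}, and let w_1,…,w_T be standard Gaussian N(0,1) random variables with arbitrary joint dependence (in particular they may depend on the sets A_t). Then E[ ∑_{t=1}^{T} |w_t| · ∑_{a ∈ A_t} √(1/(n_{a,t}+1)) ] ≤ 4·√(m·N·T·ln(T)). -/

import Mathlib

open MeasureTheory ProbabilityTheory Finset

open scoped NNReal ENNReal


lemma mgf_aux (l : ℝ) :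
    Integrable (fun x => Real.exp (l * x)) (gaussianReal 0 1) ∧
    ∫ x, Real.exp (l * x) ∂(gaussianReal 0 1) = Real.exp (l ^ 2 / 2) := by
  have hv : (1 : ℝ≥0) ≠ 0 := one_ne_zero
  have hpdf : ∀ x : ℝ, (gaussianPDFReal 0 1 x) * Real.exp (l * x)
      = Real.exp (l ^ 2 / 2) * gaussianPDFReal l 1 x := by
    intro x
    simp only [gaussianPDFReal, NNReal.coe_one, mul_one, sub_zero]
    rw [mul_assoc, ← Real.exp_add, mul_comm (Real.exp (l ^ 2 / 2)), mul_assoc,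
      ← Real.exp_add]
    congr 1
    ring
  have hmeas : Measurable fun x => (gaussianPDFReal 0 1 x).toNNReal :=
    (measurable_gaussianPDFReal 0 1).real_toNNReal
  have hrw : gaussianReal 0 1
      = volume.withDensity (fun x => ((gaussianPDFReal 0 1 x).toNNReal : ℝ≥0∞)) := by
    rw [gaussianReal_of_var_ne_zero 0 hv]; rfl
  have hfun : (fun x => ((gaussianPDFReal 0 1 x).toNNReal : ℝ≥0) • Real.exp (l * x))
      = fun x => Real.exp (l ^ 2 / 2) * gaussianPDFReal l 1 x := by
    funext x
    rw [NNReal.smul_def, Real.coe_toNNReal _ (gaussianPDFReal_nonneg 0 1 x), smul_eq_mul, hpdf]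
  constructor
  · rw [hrw, integrable_withDensity_iff_integrable_smul hmeas, hfun]
    exact (integrable_gaussianPDFReal l 1).const_mul _
  · rw [hrw, integral_withDensity_eq_integral_smul hmeas, hfun]
    rw [integral_const_mul, integral_gaussianPDFReal_eq_one l hv, mul_one]


lemma sum_inv_sqrt (k : ℕ) :
    ∑ i ∈ Finset.range k, Real.sqrt (1 / ((i : ℝ) + 1)) ≤ 2 * Real.sqrt k := by
  induction k with
  | zero => simp
  | succ k ih =>
    rw [Finset.sum_range_succ]
    have hk1 : (0:ℝ) < (k:ℝ) + 1 := by positivity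
    have hs : Real.sqrt ((k:ℝ)) ^ 2 = (k:ℝ) := Real.sq_sqrt (by positivity)
    have hu : Real.sqrt ((k:ℝ) + 1) ^ 2 = (k:ℝ) + 1 := Real.sq_sqrt hk1.le
    have hupos : 0 < Real.sqrt ((k:ℝ) + 1) := Real.sqrt_pos.2 hk1
    have hcast : ((k + 1 : ℕ) : ℝ) = (k:ℝ) + 1 := by push_cast; ring
    have h1 : Real.sqrt (1 / ((k:ℝ) + 1)) = 1 / Real.sqrt ((k:ℝ) + 1) := by
      rw [one_div, one_div, Real.sqrt_inv]
    rw [h1, hcast]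
    have hsq : (Real.sqrt (k:ℝ) - Real.sqrt ((k:ℝ)+1)) ^ 2 ≥ 0 := sq_nonneg _
    have key : 1 / Real.sqrt ((k:ℝ)+1) ≤ 2 * Real.sqrt ((k:ℝ)+1) - 2 * Real.sqrt (k:ℝ) := by
      rw [div_le_iff₀ hupos]
      nlinarith [Real.sqrt_nonneg (k:ℝ), Real.sqrt_nonneg ((k:ℝ)+1)]
    linarith [ih]


lemma swap_sum (N T : ℕ) (B : ℕ → Finset ℕ) (hsub : ∀ t, B t ⊆ Finset.Icc 1 N)
    (g : ℕ → ℕ → ℝ) :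
    ∑ t ∈ Finset.Icc 1 T, ∑ a ∈ B t, g a t
      = ∑ a ∈ Finset.Icc 1 N, ∑ t ∈ (Finset.Icc 1 T).filter (fun t => a ∈ B t), g a t := by
  calc ∑ t ∈ Finset.Icc 1 T, ∑ a ∈ B t, g a t
      = ∑ t ∈ Finset.Icc 1 T, ∑ a ∈ Finset.Icc 1 N, (if a ∈ B t then g a t else 0) := by
        refine Finset.sum_congr rfl fun t _ => ?_
        rw [Finset.sum_ite_mem, Finset.inter_eq_right.2 (hsub t)]
    _ = ∑ a ∈ Finset.Icc 1 N, ∑ t ∈ Finset.Icc 1 T, (if a ∈ B t then g a t else 0) :=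
        Finset.sum_comm
    _ = ∑ a ∈ Finset.Icc 1 N, ∑ t ∈ (Finset.Icc 1 T).filter (fun t => a ∈ B t), g a t := by
        refine Finset.sum_congr rfl fun a _ => ?_
        rw [Finset.sum_filter]

lemma per_arm (T a : ℕ) (B : ℕ → Finset ℕ) :
    ∑ t ∈ (Finset.Icc 1 T).filter (fun t => a ∈ B t),
        Real.sqrt (1 / ((((Finset.Icc 1 (t - 1)).filter (fun τ => a ∈ B τ)).card : ℝ) + 1))
      ≤ 2 * Real.sqrt (((Finset.Icc 1 T).filter (fun t => a ∈ B t)).card) := by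
  have hmono : ∀ t ∈ (Finset.Icc 1 T).filter (fun t => a ∈ B t),
      ∀ t' ∈ (Finset.Icc 1 T).filter (fun t => a ∈ B t), t < t' →
      ((Finset.Icc 1 (t - 1)).filter (fun τ => a ∈ B τ)).card
        < ((Finset.Icc 1 (t' - 1)).filter (fun τ => a ∈ B τ)).card := by
    intro t ht t' ht' hlt
    simp only [Finset.mem_filter, Finset.mem_Icc] at ht ht'
    have hnotmem : t ∉ (Finset.Icc 1 (t - 1)).filter (fun τ => a ∈ B τ) := by
      simp only [Finset.mem_filter, Finset.mem_Icc]
      rintro ⟨⟨h1', h2'⟩, -⟩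
      omega
    have hsub2 : insert t ((Finset.Icc 1 (t - 1)).filter (fun τ => a ∈ B τ))
        ⊆ (Finset.Icc 1 (t' - 1)).filter (fun τ => a ∈ B τ) := by
      intro x hx
      rcases Finset.mem_insert.1 hx with rfl | hx
      · refine Finset.mem_filter.2 ⟨Finset.mem_Icc.2 ⟨ht.1.1, ?_⟩, ht.2⟩
        omega
      · rcases Finset.mem_filter.1 hx with ⟨hx1, hx2⟩
        rcases Finset.mem_Icc.1 hx1 with ⟨hx3, hx4⟩
        exact Finset.mem_filter.2 ⟨Finset.mem_Icc.2 ⟨hx3, by omega⟩, hx2⟩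
    have hcc := Finset.card_le_card hsub2
    rw [Finset.card_insert_of_notMem hnotmem] at hcc
    omega
  have hinj : ∀ x ∈ (Finset.Icc 1 T).filter (fun t => a ∈ B t),
      ∀ y ∈ (Finset.Icc 1 T).filter (fun t => a ∈ B t),
      ((Finset.Icc 1 (x - 1)).filter (fun τ => a ∈ B τ)).card
        = ((Finset.Icc 1 (y - 1)).filter (fun τ => a ∈ B τ)).card → x = y := by
    intro x hx y hy hxy
    rcases lt_trichotomy x y with h | h | h
    · exact absurd hxy (Nat.ne_of_lt (hmono x hx y hy h))
    · exact h
    · exact absurd hxy.symm (Nat.ne_of_lt (hmono y hy x hx h))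
  have himg : ∀ t ∈ (Finset.Icc 1 T).filter (fun t => a ∈ B t),
      ((Finset.Icc 1 (t - 1)).filter (fun τ => a ∈ B τ)).card
        < ((Finset.Icc 1 T).filter (fun t => a ∈ B t)).card := by
    intro t ht
    have ht' := Finset.mem_filter.1 ht
    rcases Finset.mem_Icc.1 ht'.1 with ⟨ht1, ht2⟩
    have hsub3 : (Finset.Icc 1 (t - 1)).filter (fun τ => a ∈ B τ)
        ⊆ ((Finset.Icc 1 T).filter (fun t => a ∈ B t)).erase t := by
      intro x hx
      rcases Finset.mem_filter.1 hx with ⟨hx1, hx2⟩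
      rcases Finset.mem_Icc.1 hx1 with ⟨hx3, hx4⟩
      exact Finset.mem_erase.2 ⟨by omega, Finset.mem_filter.2
        ⟨Finset.mem_Icc.2 ⟨hx3, by omega⟩, hx2⟩⟩
    have h4 := Finset.card_le_card hsub3
    rw [Finset.card_erase_of_mem ht] at h4
    have hpos : 0 < ((Finset.Icc 1 T).filter (fun t => a ∈ B t)).card :=
      Finset.card_pos.2 ⟨t, ht⟩
    omega
  have himage : ∑ i ∈ ((Finset.Icc 1 T).filter (fun t => a ∈ B t)).image
            (fun t => ((Finset.Icc 1 (t - 1)).filter (fun τ => a ∈ B τ)).card),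
          Real.sqrt (1 / ((i : ℝ) + 1))
      = ∑ t ∈ (Finset.Icc 1 T).filter (fun t => a ∈ B t),
        Real.sqrt (1 / ((((Finset.Icc 1 (t - 1)).filter (fun τ => a ∈ B τ)).card : ℝ) + 1)) :=
    Finset.sum_image hinj
  calc ∑ t ∈ (Finset.Icc 1 T).filter (fun t => a ∈ B t),
        Real.sqrt (1 / ((((Finset.Icc 1 (t - 1)).filter (fun τ => a ∈ B τ)).card : ℝ) + 1))
      = ∑ i ∈ ((Finset.Icc 1 T).filter (fun t => a ∈ B t)).image
            (fun t => ((Finset.Icc 1 (t - 1)).filter (fun τ => a ∈ B τ)).card),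
          Real.sqrt (1 / ((i : ℝ) + 1)) :=
        himage.symm
    _ ≤ ∑ i ∈ Finset.range ((Finset.Icc 1 T).filter (fun t => a ∈ B t)).card,
          Real.sqrt (1 / ((i : ℝ) + 1)) := by
        refine Finset.sum_le_sum_of_subset_of_nonneg ?_ (fun i _ _ => Real.sqrt_nonneg _)
        intro i hi
        rcases Finset.mem_image.1 hi with ⟨t, ht, rfl⟩
        exact Finset.mem_range.2 (himg t ht)
    _ ≤ 2 * Real.sqrt (((Finset.Icc 1 T).filter (fun t => a ∈ B t)).card) := sum_inv_sqrt _

lemma card_sum (m N T : ℕ) (B : ℕ → Finset ℕ) (hsub : ∀ t, B t ⊆ Finset.Icc 1 N)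
    (hcard : ∀ t, (B t).card ≤ m) :
    ∑ a ∈ Finset.Icc 1 N, ((Finset.Icc 1 T).filter (fun t => a ∈ B t)).card ≤ m * T := by
  have heq : ∑ a ∈ Finset.Icc 1 N, ((Finset.Icc 1 T).filter (fun t => a ∈ B t)).card
      = ∑ t ∈ Finset.Icc 1 T, (B t).card := by
    calc ∑ a ∈ Finset.Icc 1 N, ((Finset.Icc 1 T).filter (fun t => a ∈ B t)).card
        = ∑ a ∈ Finset.Icc 1 N, ∑ t ∈ Finset.Icc 1 T, (if a ∈ B t then 1 else 0) := by
          refine Finset.sum_congr rfl fun a _ => ?_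
          rw [Finset.card_filter]
      _ = ∑ t ∈ Finset.Icc 1 T, ∑ a ∈ Finset.Icc 1 N, (if a ∈ B t then 1 else 0) :=
          Finset.sum_comm
      _ = ∑ t ∈ Finset.Icc 1 T, (B t).card := by
          refine Finset.sum_congr rfl fun t _ => ?_
          rw [Finset.sum_ite_mem, Finset.inter_eq_right.2 (hsub t)]
          simp
  rw [heq]
  calc ∑ t ∈ Finset.Icc 1 T, (B t).card ≤ ∑ t ∈ Finset.Icc 1 T, m :=
        Finset.sum_le_sum fun t _ => hcard t
    _ ≤ m * T := by rw [Finset.sum_const, Nat.card_Icc]; simp [Nat.mul_comm]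

lemma cs_sqrt (N : ℕ) (k : ℕ → ℕ) :
    ∑ a ∈ Finset.Icc 1 N, Real.sqrt (k a)
      ≤ Real.sqrt ((N : ℝ) * ∑ a ∈ Finset.Icc 1 N, (k a : ℝ)) := by
  rw [← Real.sqrt_sq (by positivity : (0:ℝ) ≤ ∑ a ∈ Finset.Icc 1 N, Real.sqrt (k a))]
  apply Real.sqrt_le_sqrt
  have hcs := sq_sum_le_card_mul_sum_sq
    (s := Finset.Icc 1 N) (f := fun a => Real.sqrt (k a))
  have hcard' : (Finset.Icc 1 N).card = N := by rw [Nat.card_Icc]; omega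
  calc (∑ a ∈ Finset.Icc 1 N, Real.sqrt (k a)) ^ 2
      ≤ ((Finset.Icc 1 N).card : ℝ) * ∑ a ∈ Finset.Icc 1 N, Real.sqrt (k a) ^ 2 := by
        exact_mod_cast hcs
    _ = (N : ℝ) * ∑ a ∈ Finset.Icc 1 N, ((k a) : ℝ) := by
        rw [hcard']
        congr 1
        exact Finset.sum_congr rfl fun a _ => Real.sq_sqrt (by positivity)

lemma det_bound (m N T : ℕ) (B : ℕ → Finset ℕ)
    (hsub : ∀ t, B t ⊆ Finset.Icc 1 N) (hcard : ∀ t, (B t).card ≤ m) :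
    ∑ t ∈ Finset.Icc 1 T, ∑ a ∈ B t,
        Real.sqrt (1 / ((((Finset.Icc 1 (t - 1)).filter (fun τ => a ∈ B τ)).card : ℝ) + 1))
      ≤ 2 * Real.sqrt ((m : ℝ) * N * T) := by
  rw [swap_sum N T B hsub]
  have hsum : (∑ a ∈ Finset.Icc 1 N,
      (((Finset.Icc 1 T).filter (fun t => a ∈ B t)).card : ℝ)) ≤ (m : ℝ) * T := by
    have := card_sum m N T B hsub hcard
    exact_mod_cast this
  calc ∑ a ∈ Finset.Icc 1 N, ∑ t ∈ (Finset.Icc 1 T).filter (fun t => a ∈ B t),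
        Real.sqrt (1 / ((((Finset.Icc 1 (t - 1)).filter (fun τ => a ∈ B τ)).card : ℝ) + 1))
      ≤ ∑ a ∈ Finset.Icc 1 N,
          2 * Real.sqrt (((Finset.Icc 1 T).filter (fun t => a ∈ B t)).card) :=
        Finset.sum_le_sum fun a _ => per_arm T a B
    _ = 2 * ∑ a ∈ Finset.Icc 1 N,
          Real.sqrt (((Finset.Icc 1 T).filter (fun t => a ∈ B t)).card) := by
        rw [Finset.mul_sum]
    _ ≤ 2 * Real.sqrt ((N : ℝ) * ∑ a ∈ Finset.Icc 1 N,
          (((Finset.Icc 1 T).filter (fun t => a ∈ B t)).card : ℝ)) := by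
        have := cs_sqrt N (fun a => ((Finset.Icc 1 T).filter (fun t => a ∈ B t)).card)
        linarith
    _ ≤ 2 * Real.sqrt ((N : ℝ) * ((m : ℝ) * T)) := by
        have h0 : (0:ℝ) ≤ N := Nat.cast_nonneg N
        have : (N : ℝ) * ∑ a ∈ Finset.Icc 1 N,
            (((Finset.Icc 1 T).filter (fun t => a ∈ B t)).card : ℝ) ≤ (N:ℝ) * ((m:ℝ)*T) :=
          mul_le_mul_of_nonneg_left hsum h0
        have := Real.sqrt_le_sqrt this
        linarith
    _ = 2 * Real.sqrt ((m : ℝ) * N * T) := by ring_nf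

/-- deviation term of CL-SG. Let `m, N ≥ 1` and `T ≥ 2`. For random subsets
`A t` of `{1,…,N}` of cardinality at most `m`, pull counts
`n a t = #{τ ∈ {1,…,t−1} : a ∈ A τ}`, and standard Gaussian seeds `w t` with arbitrary joint
dependence, `E[∑_{t=1}^T |w t| ∑_{a∈A t} √(1/(n a t + 1))] ≤ 4·√(m N T ln T)`. -/
theorem stmt8 {Ω : Type*} [MeasurableSpace Ω] (P : Measure Ω) [IsProbabilityMeasure P]
    (m N T : ℕ) (hm : 1 ≤ m) (hN : 1 ≤ N) (hT : 2 ≤ T)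
    (A : ℕ → Ω → Finset ℕ)
    (hAmeas : ∀ a t, MeasurableSet {ω | a ∈ A t ω})
    (hAsub : ∀ t ω, A t ω ⊆ Finset.Icc 1 N)
    (hAcard : ∀ t ω, (A t ω).card ≤ m)
    (n : ℕ → ℕ → Ω → ℕ)
    (hn : ∀ a t ω, n a t ω = ((Finset.Icc 1 (t - 1)).filter (fun τ => a ∈ A τ ω)).card)
    (w : ℕ → Ω → ℝ)
    (hwmeas : ∀ t, Measurable (w t))
    (hwlaw : ∀ t ∈ Finset.Icc 1 T, Measure.map (w t) P = ProbabilityTheory.gaussianReal 0 1) :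
    ∫ ω, ∑ t ∈ Finset.Icc 1 T, |w t ω| *
        ∑ a ∈ A t ω, Real.sqrt (1 / ((n a t ω : ℝ) + 1)) ∂P
      ≤ 4 * Real.sqrt ((m : ℝ) * N * T * Real.log T) := by
  have hT1 : (1:ℝ) < T := by exact_mod_cast hT
  have hTpos : (0:ℝ) < T := by linarith
  have hL : 0 < Real.log T := Real.log_pos hT1
  obtain ⟨lam, hlam⟩ : ∃ lam : ℝ, lam = 2 * Real.sqrt (Real.log T) := ⟨_, rfl⟩
  have hlampos : 0 < lam := by
    rw [hlam]; positivity
  have hlam2 : lam ^ 2 = 4 * Real.log T := by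
    rw [hlam, mul_pow, Real.sq_sqrt hL.le]; ring
  have hlog2 : Real.log 2 ≤ Real.log T := by
    apply Real.log_le_log (by norm_num)
    exact_mod_cast hT
  have hlamge : 1 ≤ lam := by
    nlinarith [Real.log_two_gt_d9, hlam2, hlampos]
  obtain ⟨c, hc⟩ : ∃ c : ℝ, c = lam - 1 / lam := ⟨_, rfl⟩
  have hcpos : 0 ≤ c := by
    rw [hc]
    have : 1 / lam ≤ 1 := by
      rw [div_le_one hlampos]; exact hlamge
    linarith
  obtain ⟨D, hD⟩ : ∃ D : ℝ, D = Real.exp (-(lam * c) - 1) / lam := ⟨_, rfl⟩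
  have hDpos : 0 < D := by rw [hD]; positivity
  -- mgf facts transferred to P
  have exp_int : ∀ l : ℝ, ∀ t ∈ Finset.Icc 1 T,
      Integrable (fun ω => Real.exp (l * w t ω)) P ∧
      ∫ ω, Real.exp (l * w t ω) ∂P = Real.exp (l ^ 2 / 2) := by
    intro l t ht
    have hmg := mgf_aux l
    have hmap := hwlaw t ht
    have hmeasl : Measurable fun x : ℝ => Real.exp (l * x) :=
      Real.measurable_exp.comp (measurable_id.const_mul l)
    constructor
    · have h1 : Integrable (fun x => Real.exp (l * x)) (Measure.map (w t) P) := by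
        rw [hmap]; exact hmg.1
      exact (integrable_map_measure hmeasl.aestronglyMeasurable
        (hwmeas t).aemeasurable).1 h1
    · calc ∫ ω, Real.exp (l * w t ω) ∂P
          = ∫ x, Real.exp (l * x) ∂(Measure.map (w t) P) :=
            (integral_map (hwmeas t).aemeasurable hmeasl.aestronglyMeasurable).symm
        _ = Real.exp (l ^ 2 / 2) := by rw [hmap]; exact hmg.2
  -- the dominating function g
  have hg_int : Integrable (fun ω => c + ∑ τ ∈ Finset.Icc 1 T,
      (Real.exp (lam * w τ ω) + Real.exp (-lam * w τ ω)) * D) P := by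
    refine (integrable_const c).add ?_
    refine integrable_finset_sum _ fun τ hτ => ?_
    exact (((exp_int lam τ hτ).1).add ((exp_int (-lam) τ hτ).1)).mul_const D
  have hint1 : ∀ τ ∈ Finset.Icc 1 T, Integrable (fun ω =>
      (Real.exp (lam * w τ ω) + Real.exp (-lam * w τ ω)) * D) P := fun τ hτ => by
    exact (((exp_int lam τ hτ).1).add ((exp_int (-lam) τ hτ).1)).mul_const D
  have hint2 : Integrable (fun ω => ∑ τ ∈ Finset.Icc 1 T,
      (Real.exp (lam * w τ ω) + Real.exp (-lam * w τ ω)) * D) P := by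
    exact integrable_finset_sum _ hint1
  -- pointwise bound |w t ω| ≤ g ω
  have hpoint : ∀ ω, ∀ t ∈ Finset.Icc 1 T, |w t ω| ≤ c + ∑ τ ∈ Finset.Icc 1 T,
      (Real.exp (lam * w τ ω) + Real.exp (-lam * w τ ω)) * D := by
    intro ω t ht
    have k1 : lam * (|w t ω| - c) ≤ Real.exp (lam * (|w t ω| - c) - 1) := by
      have := Real.add_one_le_exp (lam * (|w t ω| - c) - 1)
      linarith
    have k2 : |w t ω| - c ≤ Real.exp (lam * (|w t ω| - c) - 1) / lam := by
      rw [le_div_iff₀ hlampos]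
      linarith [k1]
    have k3 : Real.exp (lam * (|w t ω| - c) - 1)
        = Real.exp (lam * |w t ω|) * Real.exp (-(lam * c) - 1) := by
      rw [← Real.exp_add]; ring_nf
    have k4 : Real.exp (lam * |w t ω|)
        ≤ Real.exp (lam * w t ω) + Real.exp (-lam * w t ω) := by
      rcases le_total 0 (w t ω) with h | h
      · rw [abs_of_nonneg h]
        have := (Real.exp_pos (-lam * w t ω)).le
        linarith
      · rw [abs_of_nonpos h]
        have hh : lam * -w t ω = -lam * w t ω := by ring
        rw [hh]
        have := (Real.exp_pos (lam * w t ω)).le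
        linarith
    have k5 : |w t ω| ≤ c + (Real.exp (lam * w t ω) + Real.exp (-lam * w t ω)) * D := by
      have : Real.exp (lam * (|w t ω| - c) - 1) / lam
          ≤ (Real.exp (lam * w t ω) + Real.exp (-lam * w t ω)) * D := by
        rw [k3, hD, ← mul_div_assoc]
        have hmul := mul_le_mul_of_nonneg_right k4 (Real.exp_pos (-(lam * c) - 1)).le
        exact (div_le_div_iff_of_pos_right hlampos).2 hmul
      linarith [k2, this]
    have k6 : (Real.exp (lam * w t ω) + Real.exp (-lam * w t ω)) * D
        ≤ ∑ τ ∈ Finset.Icc 1 T,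
          (Real.exp (lam * w τ ω) + Real.exp (-lam * w τ ω)) * D := by
      refine Finset.single_le_sum
        (f := fun τ => (Real.exp (lam * w τ ω) + Real.exp (-lam * w τ ω)) * D)
        (fun τ _ => ?_) ht
      have := (Real.exp_pos (lam * w τ ω)).le
      have := (Real.exp_pos (-lam * w τ ω)).le
      positivity
    linarith [k5, k6]
  -- pointwise bound on the whole integrand
  have hF : ∀ ω, (∑ t ∈ Finset.Icc 1 T, |w t ω| *
        ∑ a ∈ A t ω, Real.sqrt (1 / ((n a t ω : ℝ) + 1)))
      ≤ (c + ∑ τ ∈ Finset.Icc 1 T,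
          (Real.exp (lam * w τ ω) + Real.exp (-lam * w τ ω)) * D)
        * (2 * Real.sqrt ((m : ℝ) * N * T)) := by
    intro ω
    have hSnn : ∀ t, 0 ≤ ∑ a ∈ A t ω, Real.sqrt (1 / ((n a t ω : ℝ) + 1)) :=
      fun t => Finset.sum_nonneg fun a _ => Real.sqrt_nonneg _
    have hgnn : 0 ≤ c + ∑ τ ∈ Finset.Icc 1 T,
        (Real.exp (lam * w τ ω) + Real.exp (-lam * w τ ω)) * D := by
      have : 0 ≤ ∑ τ ∈ Finset.Icc 1 T,
          (Real.exp (lam * w τ ω) + Real.exp (-lam * w τ ω)) * D := by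
        refine Finset.sum_nonneg fun τ _ => ?_
        have := (Real.exp_pos (lam * w τ ω)).le
        have := (Real.exp_pos (-lam * w τ ω)).le
        positivity
      linarith
    have hdet : ∑ t ∈ Finset.Icc 1 T, ∑ a ∈ A t ω,
        Real.sqrt (1 / ((n a t ω : ℝ) + 1)) ≤ 2 * Real.sqrt ((m : ℝ) * N * T) := by
      have hd := det_bound m N T (fun t => A t ω) (fun t => hAsub t ω) (fun t => hAcard t ω)
      simp only [hn]
      exact hd
    calc ∑ t ∈ Finset.Icc 1 T, |w t ω| * ∑ a ∈ A t ω, Real.sqrt (1 / ((n a t ω : ℝ) + 1))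
        ≤ ∑ t ∈ Finset.Icc 1 T, (c + ∑ τ ∈ Finset.Icc 1 T,
            (Real.exp (lam * w τ ω) + Real.exp (-lam * w τ ω)) * D)
            * ∑ a ∈ A t ω, Real.sqrt (1 / ((n a t ω : ℝ) + 1)) :=
          Finset.sum_le_sum fun t ht =>
            mul_le_mul_of_nonneg_right (hpoint ω t ht) (hSnn t)
      _ = (c + ∑ τ ∈ Finset.Icc 1 T,
            (Real.exp (lam * w τ ω) + Real.exp (-lam * w τ ω)) * D)
            * ∑ t ∈ Finset.Icc 1 T, ∑ a ∈ A t ω, Real.sqrt (1 / ((n a t ω : ℝ) + 1)) := by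
          rw [Finset.mul_sum]
      _ ≤ _ := mul_le_mul_of_nonneg_left hdet hgnn
  -- integrate
  have hmain : ∫ ω, ∑ t ∈ Finset.Icc 1 T, |w t ω| *
        ∑ a ∈ A t ω, Real.sqrt (1 / ((n a t ω : ℝ) + 1)) ∂P
      ≤ ∫ ω, (c + ∑ τ ∈ Finset.Icc 1 T,
          (Real.exp (lam * w τ ω) + Real.exp (-lam * w τ ω)) * D)
        * (2 * Real.sqrt ((m : ℝ) * N * T)) ∂P := by
    refine integral_mono_of_nonneg (Filter.Eventually.of_forall fun ω => ?_)
      (hg_int.mul_const _) (Filter.Eventually.of_forall hF)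
    refine Finset.sum_nonneg fun t _ => mul_nonneg (abs_nonneg _)
      (Finset.sum_nonneg fun a _ => Real.sqrt_nonneg _)
  -- compute the right hand side
  have hgval : ∫ ω, (c + ∑ τ ∈ Finset.Icc 1 T,
      (Real.exp (lam * w τ ω) + Real.exp (-lam * w τ ω)) * D) ∂P
      = c + (T : ℝ) * (2 * Real.exp (lam ^ 2 / 2) * D) := by
    rw [integral_add (integrable_const c) hint2]
    rw [integral_const]
    simp only [probReal_univ, smul_eq_mul, one_mul]
    congr 1
    rw [integral_finset_sum _ hint1]
    have hterm : ∀ τ ∈ Finset.Icc 1 T,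
        ∫ ω, (Real.exp (lam * w τ ω) + Real.exp (-lam * w τ ω)) * D ∂P
        = 2 * Real.exp (lam ^ 2 / 2) * D := by
      intro τ hτ
      rw [integral_mul_const, integral_add ((exp_int lam τ hτ).1) ((exp_int (-lam) τ hτ).1),
        (exp_int lam τ hτ).2, (exp_int (-lam) τ hτ).2, neg_sq]
      ring
    rw [Finset.sum_congr rfl hterm, Finset.sum_const, Nat.card_Icc]
    simp
  -- numeric bound on E g
  have hnum : c + (T : ℝ) * (2 * Real.exp (lam ^ 2 / 2) * D) ≤ lam := by
    have hlamc : lam * c = lam ^ 2 - 1 := by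
      rw [hc]; field_simp
    have hexp : Real.exp (lam ^ 2 / 2) * Real.exp (-(lam * c) - 1)
        = Real.exp (-(lam ^ 2) / 2) := by
      rw [← Real.exp_add, hlamc]; ring_nf
    have hexpT : Real.exp (-(lam ^ 2) / 2) = 1 / (T : ℝ) ^ 2 := by
      rw [hlam2]
      have h1 : Real.exp (Real.log T) = T := Real.exp_log hTpos
      rw [show -(4 * Real.log T) / 2 = -(Real.log T + Real.log T) by ring,
        Real.exp_neg, Real.exp_add, h1]
      rw [one_div, sq]
    have hx : Real.exp (lam ^ 2 / 2) * Real.exp (-(lam * c) - 1) = 1 / (T:ℝ)^2 := by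
      rw [hexp, hexpT]
    have hT0 : (T:ℝ) ≠ 0 := ne_of_gt hTpos
    have hlam0 : lam ≠ 0 := ne_of_gt hlampos
    have hterm : (T : ℝ) * (2 * Real.exp (lam ^ 2 / 2) * D) = 2 / ((T : ℝ) * lam) := by
      rw [hD]
      calc (T : ℝ) * (2 * Real.exp (lam ^ 2 / 2) * (Real.exp (-(lam * c) - 1) / lam))
          = (2 * (Real.exp (lam ^ 2 / 2) * Real.exp (-(lam * c) - 1))) * ((T:ℝ) / lam) := by
            ring
        _ = (2 * (1 / (T:ℝ)^2)) * ((T:ℝ) / lam) := by rw [hx]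
        _ = 2 / ((T : ℝ) * lam) := by field_simp
    rw [hterm, hc]
    have h2T : 2 / ((T:ℝ) * lam) ≤ 1 / lam := by
      rw [div_le_div_iff₀ (by positivity) hlampos]
      have : (2:ℝ) ≤ T := by exact_mod_cast hT
      nlinarith
    linarith
  -- finish
  have hC : (0:ℝ) ≤ 2 * Real.sqrt ((m : ℝ) * N * T) := by positivity
  calc ∫ ω, ∑ t ∈ Finset.Icc 1 T, |w t ω| *
        ∑ a ∈ A t ω, Real.sqrt (1 / ((n a t ω : ℝ) + 1)) ∂P
      ≤ ∫ ω, (c + ∑ τ ∈ Finset.Icc 1 T,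
          (Real.exp (lam * w τ ω) + Real.exp (-lam * w τ ω)) * D)
        * (2 * Real.sqrt ((m : ℝ) * N * T)) ∂P := hmain
    _ = (c + (T : ℝ) * (2 * Real.exp (lam ^ 2 / 2) * D)) * (2 * Real.sqrt ((m : ℝ) * N * T)) := by
        rw [integral_mul_const, hgval]
    _ ≤ lam * (2 * Real.sqrt ((m : ℝ) * N * T)) :=
        mul_le_mul_of_nonneg_right hnum hC
    _ = 4 * (Real.sqrt ((m : ℝ) * N * T) * Real.sqrt (Real.log T)) := by
        rw [hlam]; ring
    _ = 4 * Real.sqrt ((m : ℝ) * N * T * Real.log T) := by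
        rw [← Real.sqrt_mul (by positivity)]
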